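/- Let I ≥ 2 and let S : Θ_I → ℝ^I be continuous on the probability simplex Θ_I. Define U(y) = min_{p ∈ Θ_I} pᵀ·( S(p) + y ) for y ∈ ℝ^I (the minimum is attained since Θ_I is compact). Then: (i) U is finite-valued on all of ℝ^I and concave; (ii) U(y + t·e) = U(y) + t for every y ∈ ℝ^I and t ∈ ℝ; (iii) U is monotone: U(y + δ) ≥ U(y) for every δ ≥ 0 componentwise, with strict inequality if every component of δ is positive; (iv) U is continuous; and (v) the set { y ∈ ℝ^I : U(y) ≥ 0 } is contained in { y : y_i ≥ −e_iᵀS(e_i) for all i }, so the induced market maker has bounded worst-case loss. -/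

import Mathlib

/-- The multivariate utility induced by a scoring rule `S`:
`U(y) = min_{p ∈ Θ_I} pᵀ(S(p) + y)`. -/
noncomputable def inducedU (I : ℕ) (S : (Fin I → ℝ) → (Fin I → ℝ)) (y : Fin I → ℝ) : ℝ :=
  sInf {v : ℝ | ∃ p : Fin I → ℝ, (∀ i, 0 ≤ p i) ∧ ∑ i, p i = 1 ∧
    v = ∑ i, p i * (S p i + y i)}

/-- The utility induced by a continuous scoring rule is attained,
concave, translation equivariant along `e`, monotone, continuous, and induces a
market maker with bounded worst-case loss. -/
theorem stmt_15 (I : ℕ) (hI : 2 ≤ I) (S : (Fin I → ℝ) → (Fin I → ℝ))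
    (hScont : ContinuousOn S {p : Fin I → ℝ | (∀ i, 0 ≤ p i) ∧ ∑ i, p i = 1}) :
    -- (i) the minimum is attained (so `U` is finite-valued), and `U` is concave
    (∀ y : Fin I → ℝ, ∃ p : Fin I → ℝ, (∀ i, 0 ≤ p i) ∧ ∑ i, p i = 1 ∧
      inducedU I S y = ∑ i, p i * (S p i + y i)) ∧
    ConcaveOn ℝ Set.univ (inducedU I S) ∧
    -- (ii) translation equivariance along the all-ones vector
    (∀ (y : Fin I → ℝ) (t : ℝ),
      inducedU I S (y + t • (1 : Fin I → ℝ)) = inducedU I S y + t) ∧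
    -- (iii) monotonicity
    (∀ y δ : Fin I → ℝ, 0 ≤ δ → inducedU I S y ≤ inducedU I S (y + δ)) ∧
    (∀ y δ : Fin I → ℝ, (∀ i, 0 < δ i) → inducedU I S y < inducedU I S (y + δ)) ∧
    -- (iv) continuity
    Continuous (inducedU I S) ∧
    -- (v) bounded worst-case loss
    (∀ y : Fin I → ℝ, 0 ≤ inducedU I S y →
      ∀ i, -(S (Pi.single i 1) i) ≤ y i) := by
  have hIpos : 0 < I := lt_of_lt_of_le two_pos hI
  set K : Set (Fin I → ℝ) := {p | (∀ i, 0 ≤ p i) ∧ ∑ i, p i = 1} with hKdef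
  set f : (Fin I → ℝ) → (Fin I → ℝ) → ℝ :=
    fun y p => ∑ i, p i * (S p i + y i) with hfdef
  have hKeq : K = stdSimplex ℝ (Fin I) := rfl
  have hKcomp : IsCompact K := by rw [hKeq]; exact isCompact_stdSimplex ℝ _
  have hKne : K.Nonempty := by
    rw [hKeq]
    exact ⟨Pi.single (⟨0, hIpos⟩ : Fin I) 1, single_mem_stdSimplex ℝ _⟩
  have hUset : ∀ y, {v : ℝ | ∃ p : Fin I → ℝ, (∀ i, 0 ≤ p i) ∧ ∑ i, p i = 1 ∧
      v = ∑ i, p i * (S p i + y i)} = f y '' K := by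
    intro y
    ext v
    simp only [Set.mem_setOf_eq, Set.mem_image, hKdef, hfdef, eq_comm (a := v)]
    constructor
    · rintro ⟨p, h1, h2, h3⟩; exact ⟨p, ⟨h1, h2⟩, h3⟩
    · rintro ⟨p, ⟨h1, h2⟩, h3⟩; exact ⟨p, h1, h2, h3⟩
  have hfcont : ∀ y, ContinuousOn (f y) K := by
    intro y
    apply continuousOn_finset_sum
    intro i _
    exact (continuous_apply i).continuousOn.mul
      (((continuous_apply i).comp_continuousOn hScont).add continuousOn_const)
  -- minimizer and lower bound structure
  have hmin : ∀ y, ∃ p ∈ K, inducedU I S y = f y p ∧ ∀ q ∈ K, f y p ≤ f y q := by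
    intro y
    obtain ⟨p, hpK, hple⟩ := hKcomp.exists_isMinOn hKne (hfcont y)
    refine ⟨p, hpK, ?_, fun q hq => hple hq⟩
    rw [inducedU, hUset y]
    exact (IsLeast.csInf_eq ⟨⟨p, hpK, rfl⟩, by rintro v ⟨q, hq, rfl⟩; exact hple hq⟩)
  have hle : ∀ y, ∀ q ∈ K, inducedU I S y ≤ f y q := by
    intro y q hq
    obtain ⟨p, hpK, heq, hm⟩ := hmin y
    rw [heq]; exact hm q hq
  refine ⟨?_, ?_, ?_, ?_, ?_, ?_, ?_⟩
  -- (i) attainment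
  · intro y
    obtain ⟨p, hpK, heq, _⟩ := hmin y
    exact ⟨p, hpK.1, hpK.2, heq⟩
  -- concavity
  · refine ⟨convex_univ, ?_⟩
    intro y _ z _ a b ha hb hab
    obtain ⟨p, hpK, heq, _⟩ := hmin (a • y + b • z)
    have hsplit : f (a • y + b • z) p = a * f y p + b * f z p := by
      simp only [hfdef, Finset.mul_sum, ← Finset.sum_add_distrib]
      refine Finset.sum_congr rfl fun i _ => ?_
      simp only [Pi.add_apply, Pi.smul_apply, smul_eq_mul]
      linear_combination (-(p i * S p i)) * hab
    have h1 : a * inducedU I S y ≤ a * f y p :=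
      mul_le_mul_of_nonneg_left (hle y p hpK) ha
    have h2 : b * inducedU I S z ≤ b * f z p :=
      mul_le_mul_of_nonneg_left (hle z p hpK) hb
    simp only [smul_eq_mul]
    rw [heq, hsplit]
    linarith
  -- translation equivariance
  · intro y t
    have key : ∀ p ∈ K, f (y + t • (1 : Fin I → ℝ)) p = f y p + t := by
      intro p hp
      simp only [hfdef, Pi.add_apply, Pi.smul_apply, Pi.one_apply, smul_eq_mul, mul_one]
      rw [show ∑ i, p i * (S p i + (y i + t)) =
          ∑ i, (p i * (S p i + y i) + p i * t) from
          Finset.sum_congr rfl fun i _ => by ring]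
      rw [Finset.sum_add_distrib, ← Finset.sum_mul, hp.2, one_mul]
    obtain ⟨p, hpK, heq, _⟩ := hmin (y + t • (1 : Fin I → ℝ))
    obtain ⟨q, hqK, heq', _⟩ := hmin y
    have h1 : inducedU I S (y + t • (1 : Fin I → ℝ)) ≤ f y q + t := by
      rw [← key q hqK]; exact hle _ q hqK
    have h2 : inducedU I S y ≤ f y p := hle y p hpK
    have h3 : inducedU I S (y + t • (1 : Fin I → ℝ)) = f y p + t := by
      rw [heq, key p hpK]
    linarith [h1, h2, h3, heq']
  -- monotone
  · intro y δ hδ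
    obtain ⟨p, hpK, heq, _⟩ := hmin (y + δ)
    have key : f (y + δ) p = f y p + ∑ i, p i * δ i := by
      simp only [hfdef, Pi.add_apply, ← Finset.sum_add_distrib]
      exact Finset.sum_congr rfl fun i _ => by ring
    have hnn : 0 ≤ ∑ i, p i * δ i :=
      Finset.sum_nonneg fun i _ => mul_nonneg (hpK.1 i) (hδ i)
    have := hle y p hpK
    rw [heq, key]; linarith
  -- strict monotone
  · intro y δ hδ
    obtain ⟨p, hpK, heq, _⟩ := hmin (y + δ)
    have key : f (y + δ) p = f y p + ∑ i, p i * δ i := by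
      simp only [hfdef, Pi.add_apply, ← Finset.sum_add_distrib]
      exact Finset.sum_congr rfl fun i _ => by ring
    have hex : ∃ i, 0 < p i := by
      by_contra h
      push_neg at h
      have : ∑ i, p i ≤ 0 := Finset.sum_nonpos fun i _ => h i
      rw [hpK.2] at this; linarith
    obtain ⟨i, hi⟩ := hex
    have hpos : 0 < ∑ j, p j * δ j := by
      have h1 : p i * δ i ≤ ∑ j, p j * δ j :=
        Finset.single_le_sum (fun j _ => mul_nonneg (hpK.1 j) (hδ j).le)
          (Finset.mem_univ i)
      nlinarith [hδ i]
    have := hle y p hpK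
    rw [heq, key]; linarith
  -- continuity
  · have key : ∀ y z : Fin I → ℝ, inducedU I S z ≤ inducedU I S y + dist y z := by
      intro y z
      obtain ⟨p, hpK, heq, _⟩ := hmin y
      have h1 : inducedU I S z ≤ f z p := hle z p hpK
      have h2 : f z p = f y p + ∑ i, p i * (z i - y i) := by
        simp only [hfdef, ← Finset.sum_add_distrib]
        exact Finset.sum_congr rfl fun i _ => by ring
      have h3 : ∑ i, p i * (z i - y i) ≤ dist y z := by
        calc ∑ i, p i * (z i - y i) ≤ ∑ i, p i * dist y z := by
              refine Finset.sum_le_sum fun i _ => mul_le_mul_of_nonneg_left ?_ (hpK.1 i)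
              calc z i - y i ≤ |z i - y i| := le_abs_self _
                _ = dist (z i) (y i) := (Real.dist_eq _ _).symm
                _ ≤ dist z y := dist_le_pi_dist z y i
                _ = dist y z := dist_comm z y
          _ = dist y z := by rw [← Finset.sum_mul, hpK.2, one_mul]
      rw [heq] at *
      linarith
    have hlip : LipschitzWith 1 (inducedU I S) := by
      apply LipschitzWith.of_dist_le_mul
      intro y z
      simp only [NNReal.coe_one, one_mul, Real.dist_eq, abs_le]
      have h1 := key y z
      have h2 := key z y
      rw [dist_comm z y] at h2
      constructor <;> linarith
    exact hlip.continuous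
  -- bounded loss
  · intro y hy i
    have hpK : Pi.single i (1:ℝ) ∈ K := by rw [hKeq]; exact single_mem_stdSimplex ℝ i
    have h1 : inducedU I S y ≤ f y (Pi.single i 1) := hle y _ hpK
    have h2 : f y (Pi.single i 1) = S (Pi.single i 1) i + y i := by
      simp only [hfdef]
      rw [Finset.sum_eq_single i]
      · simp
      · intro j _ hj
        rw [Pi.single_eq_of_ne hj, zero_mul]
      · intro h; exact absurd (Finset.mem_univ i) h
    rw [h2] at h1
    linarith
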